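/- Let 𝔾 be a locally finite, connected, countably infinite graph with vertex set 𝕍 and edge set 𝔼. Then the source map ∂ : (ZMod 2)^𝔼 → (ZMod 2)^𝕍 is surjective; that is, for every subset U ⊆ 𝕍 there exists a set of edges of 𝔾 whose set of odd-degree vertices is exactly U. -/

import Mathlib

open MeasureTheory

noncomputable section

instance : MeasurableSpace (ZMod 2) := ⊤

/-- The source (mod-2 boundary) of a configuration on a set `E` of edges, at a vertex `v`:
the mod-2 number of open edges incident to `v`. -/
def srcAt {V : Type*} {E : Set (Sym2 V)} (ω : E → ZMod 2) (v : V) : ZMod 2 :=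
  (Set.ncard {e : E | ω e = 1 ∧ v ∈ (e : Sym2 V)} : ZMod 2)

/-- A configuration is even (sourceless). -/
def IsEvenConf {V : Type*} {E : Set (Sym2 V)} (ω : E → ZMod 2) : Prop :=
  ∀ v : V, srcAt ω v = 0

/-- `μ` is the uniform even subgraph measure (the Haar probability measure on the
group of even configurations): a probability measure supported on even configurations
and invariant under translation (symmetric difference) by every even configuration. -/
def IsUEG {V : Type*} (E : Set (Sym2 V)) (μ : Measure (E → ZMod 2)) : Prop :=
  IsProbabilityMeasure μ ∧ μ {ω | IsEvenConf ω} = 1 ∧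
    ∀ γ : E → ZMod 2, IsEvenConf γ → Measure.map (fun ω => ω + γ) μ = μ

/-- The graph of open edges of a configuration. -/
def openGraph {V : Type*} {E : Set (Sym2 V)} (ω : E → ZMod 2) : SimpleGraph V :=
  SimpleGraph.fromEdgeSet {e : Sym2 V | ∃ h : e ∈ E, ω ⟨e, h⟩ = 1}

/-- The connected component of `v` in the graph of open edges is infinite. -/
def PercolatesAt {V : Type*} {E : Set (Sym2 V)} (ω : E → ZMod 2) (v : V) : Prop :=
  {w : V | (openGraph ω).Reachable v w}.Infinite

/-- The hypercubic lattice `ℤ^d`. -/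
def latticeGraph (d : ℕ) : SimpleGraph (Fin d → ℤ) where
  Adj u v := ∑ i, |u i - v i| = 1
  symm := ⟨fun u v h => by simpa [abs_sub_comm] using h⟩
  loopless := ⟨fun u h => by simp at h⟩

namespace SourceAux

open Classical

variable {V : Type} {G : SimpleGraph V}

lemma zmod2_cases (x : ZMod 2) : x = 0 ∨ x = 1 := by revert x; decide

lemma inc_finite (hlf : ∀ v : V, {e : Sym2 V | e ∈ G.edgeSet ∧ v ∈ e}.Finite) (v : V) :
    {e : G.edgeSet | v ∈ (e : Sym2 V)}.Finite := by
  have h : {e : G.edgeSet | v ∈ (e : Sym2 V)}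
      = Subtype.val ⁻¹' {e : Sym2 V | e ∈ G.edgeSet ∧ v ∈ e} := by
    ext e; simp [e.2]
  rw [h]
  exact (hlf v).preimage (Subtype.val_injective.injOn)

/-- Finset of edges incident to `v`. -/
def incFinset (hlf : ∀ v : V, {e : Sym2 V | e ∈ G.edgeSet ∧ v ∈ e}.Finite) (v : V) :
    Finset G.edgeSet := (inc_finite hlf v).toFinset

lemma srcAt_eq_sum (hlf : ∀ v : V, {e : Sym2 V | e ∈ G.edgeSet ∧ v ∈ e}.Finite)
    (ω : G.edgeSet → ZMod 2) (v : V) :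
    srcAt ω v = ∑ e ∈ incFinset hlf v, ω e := by
  classical
  have hset : {e : G.edgeSet | ω e = 1 ∧ v ∈ (e : Sym2 V)}
      = ((incFinset hlf v).filter (fun e => ω e = 1) : Finset G.edgeSet) := by
    ext e; simp [incFinset, inc_finite, and_comm]
  rw [srcAt, hset, Set.ncard_coe_finset]
  have h1 : ∑ e ∈ incFinset hlf v, ω e
      = ∑ e ∈ (incFinset hlf v).filter (fun e => ω e = 1), ω e := by
    refine (Finset.sum_filter_of_ne ?_).symm
    intro e _ he
    rcases zmod2_cases (ω e) with h | h
    · exact absurd h he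
    · exact h
  rw [h1]
  have h2 : ∑ e ∈ (incFinset hlf v).filter (fun e => ω e = 1), ω e
      = ∑ _e ∈ (incFinset hlf v).filter (fun e => ω e = 1), (1 : ZMod 2) := by
    refine Finset.sum_congr rfl ?_
    intro e he
    exact (Finset.mem_filter.mp he).2
  rw [h2, Finset.sum_const, nsmul_eq_mul, mul_one]

lemma srcAt_add (hlf : ∀ v : V, {e : Sym2 V | e ∈ G.edgeSet ∧ v ∈ e}.Finite)
    (ω γ : G.edgeSet → ZMod 2) (v : V) :
    srcAt (ω + γ) v = srcAt ω v + srcAt γ v := by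
  simp [srcAt_eq_sum hlf, Finset.sum_add_distrib]

/-- Indicator configuration of a single edge. -/
def χ (G : SimpleGraph V) (e0 : Sym2 V) : G.edgeSet → ZMod 2 :=
  fun e => if (e : Sym2 V) = e0 then 1 else 0

lemma srcAt_chi (hlf : ∀ v : V, {e : Sym2 V | e ∈ G.edgeSet ∧ v ∈ e}.Finite)
    {u w : V} (h : G.Adj u w) (x : V) :
    srcAt (χ G s(u, w)) x
      = (if x = u then 1 else 0) + (if x = w then 1 else 0) := by
  classical
  rw [srcAt_eq_sum hlf]
  set E0 : G.edgeSet := ⟨s(u, w), h⟩ with hE0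
  have hre : ∀ e : G.edgeSet, ((e : Sym2 V) = s(u, w)) ↔ e = E0 := by
    intro e; constructor
    · intro he; exact Subtype.ext he
    · intro he; rw [he]
  have : ∑ e ∈ incFinset hlf x, χ G s(u, w) e
      = ∑ e ∈ incFinset hlf x, (if e = E0 then 1 else 0) := by
    refine Finset.sum_congr rfl fun e _ => ?_
    simp only [χ, hre]
  rw [this, Finset.sum_ite_eq' (incFinset hlf x) E0 (fun _ => (1 : ZMod 2))]
  have hmem : E0 ∈ incFinset hlf x ↔ (x = u ∨ x = w) := by
    simp [incFinset, inc_finite, hE0, Sym2.mem_iff]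
  by_cases hxu : x = u <;> by_cases hxw : x = w
  · exact absurd (hxu.symm.trans hxw) h.ne
  · simp only [hmem]; simp [hxu, hxw, h.ne, h.ne']
  · simp only [hmem]; simp [hxu, hxw, h.ne, h.ne']
  · simp only [hmem]; simp [hxu, hxw, h.ne, h.ne']

/-- The edge-indicator configuration of a walk (mod 2). -/
def ωOfWalk : ∀ {a b : V}, G.Walk a b → (G.edgeSet → ZMod 2)
  | _, _, SimpleGraph.Walk.nil => 0
  | _, _, @SimpleGraph.Walk.cons _ _ a c _ h q => χ G s(a, c) + ωOfWalk q

lemma srcAt_zero (hlf : ∀ v : V, {e : Sym2 V | e ∈ G.edgeSet ∧ v ∈ e}.Finite) (x : V) :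
    srcAt (0 : G.edgeSet → ZMod 2) x = 0 := by
  simp [srcAt_eq_sum hlf]

lemma srcAt_walk (hlf : ∀ v : V, {e : Sym2 V | e ∈ G.edgeSet ∧ v ∈ e}.Finite)
    {a b : V} (p : G.Walk a b) (x : V) :
    srcAt (ωOfWalk p) x = (if x = a then 1 else 0) + (if x = b then 1 else 0) := by
  induction p with
  | @nil u =>
    rw [ωOfWalk, srcAt_zero hlf]
    by_cases hxa : x = u <;> simp [hxa] <;> decide
  | @cons a' c' b' h q ih =>
    rw [ωOfWalk, srcAt_add hlf, srcAt_chi hlf h, ih]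
    have key : ∀ y1 y2 y3 : ZMod 2, (y1 + y2) + (y2 + y3) = y1 + y3 := by decide
    exact key _ _ _

end SourceAux

/-- For a locally finite, connected, countably infinite graph the source
map `∂ : (ZMod 2)^𝔼 → (ZMod 2)^𝕍` is surjective. -/
theorem source_map_surjective {V : Type} [Countable V] [Infinite V]
    (G : SimpleGraph V)
    (hlf : ∀ v : V, {e : Sym2 V | e ∈ G.edgeSet ∧ v ∈ e}.Finite)
    (hconn : G.Connected) :
    Function.Surjective (fun (ω : G.edgeSet → ZMod 2) (v : V) => srcAt ω v) := by
  classical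
  open SourceAux in
  set F : (G.edgeSet → ZMod 2) → (V → ZMod 2) := fun ω v => srcAt ω v with hF
  have hcont : Continuous F := by
    apply continuous_pi
    intro v
    have hfac : (fun ω : G.edgeSet → ZMod 2 => srcAt ω v)
        = (fun σ : (↥(incFinset hlf v) → ZMod 2) => ∑ e : ↥(incFinset hlf v), σ e)
          ∘ (fun ω (e : ↥(incFinset hlf v)) => ω e) := by
      funext ω
      simp only [Function.comp_apply]
      rw [srcAt_eq_sum hlf, ← Finset.sum_coe_sort]
    rw [hF]
    simp only [hfac]
    exact (continuous_of_discreteTopology).comp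
      (continuous_pi fun e => continuous_apply (e : G.edgeSet))
  have hclosed : IsClosed (Set.range F) := (isCompact_range hcont).isClosed
  intro f
  have hdense : f ∈ closure (Set.range F) := by
    rw [mem_closure_iff_nhds]
    intro U hU
    rw [nhds_pi, Filter.mem_pi] at hU
    obtain ⟨I, hIfin, t, ht, hsub⟩ := hU
    obtain ⟨w, hw⟩ := hIfin.infinite_compl.nonempty
    set B : Finset V := hIfin.toFinset.filter (fun v => f v = 1) with hB
    set ω : G.edgeSet → ZMod 2 :=
      ∑ v ∈ B, ωOfWalk ((hconn.preconnected v w).some) with hω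
    have hsrc : ∀ x ∈ I, srcAt ω x = f x := by
      intro x hx
      have hxw : x ≠ w := fun hxw => hw (hxw ▸ hx)
      have hsum : srcAt ω x = ∑ v ∈ B, srcAt (ωOfWalk ((hconn.preconnected v w).some)) x := by
        rw [hω]
        simp only [srcAt_eq_sum hlf, Finset.sum_apply]
        rw [Finset.sum_comm]
      rw [hsum]
      have : ∀ v ∈ B, srcAt (ωOfWalk ((hconn.preconnected v w).some)) x
          = (if x = v then 1 else 0) := by
        intro v _
        rw [srcAt_walk hlf]
        simp [hxw]
      rw [Finset.sum_congr rfl this]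
      have hsumif : ∑ v ∈ B, (if x = v then (1 : ZMod 2) else 0)
          = if x ∈ B then 1 else 0 := by
        simp only [eq_comm (a := x)]
        exact Finset.sum_ite_eq' B x (fun _ => (1 : ZMod 2))
      rw [hsumif]
      by_cases hfx : f x = 1
      · have : x ∈ B := by simp [hB, hIfin, hx, hfx]
        simp [this, hfx]
      · have hfx0 : f x = 0 := (zmod2_cases (f x)).resolve_right hfx
        have : x ∉ B := by simp [hB, hIfin, hfx]
        simp [this, hfx0]
    refine ⟨F ω, ?_, Set.mem_range_self ω⟩
    apply hsub
    intro v hv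
    have hfv : f v ∈ t v := by
      have := ht v
      rwa [nhds_discrete, Filter.mem_pure] at this
    have : F ω v = f v := hsrc v hv
    rw [this]
    exact hfv
  rw [hclosed.closure_eq] at hdense
  exact hdense
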